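/- Fix κ > 0, m ∈ (−1,1), c ∈ (0,1). Suppose θ ∈ (0,1) satisfies (∂/∂θ) Ξ(m,θ;c) = −κc, and set p_+ = 2θc/(1+m) and p_− = 2(1−θ)c/(1−m), assumed to lie in (0,1). Then p_+/(1−p_+) = e^κ · p_−/(1−p_−) and p_+·(1+m)/2 + p_−·(1−m)/2 = c; consequently (p_+, p_−) coincides with the unique solution (q_+, q_−) of these two equations. Moreover, −(∂/∂m) Ξ(m,θ;c) = (1/2) log((1−p_+)/(1−p_−)). -/

import Mathlib

open scoped BigOperators
open Filter

noncomputable section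

/-- Entropy function of the Bernoulli distribution (finite branch). -/
def entS (p : ℝ) : ℝ := p * Real.log p + (1 - p) * Real.log (1 - p)

/-- Mole fraction `p_+ = 2θc/(1+m)`. -/
def pPlus (m θ c : ℝ) : ℝ := 2 * θ * c / (1 + m)

/-- Mole fraction `p_- = 2(1-θ)c/(1-m)`. -/
def pMinus (m θ c : ℝ) : ℝ := 2 * (1 - θ) * c / (1 - m)

/-- `Ξ(m,θ;c)` (finite branch). -/
def Xi (m θ c : ℝ) : ℝ :=
  -((1 + m) / 2) * entS (pPlus m θ c) - ((1 - m) / 2) * entS (pMinus m θ c)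

/-- Entropy function with the convention `S(p) = +∞` for `p ∉ [0,1]`. -/
def entSE (p : ℝ) : EReal := if 0 ≤ p ∧ p ≤ 1 then ((entS p : ℝ) : EReal) else ⊤

/-- `-Ξ(m,θ;c)` as an extended real (`+∞` where some mole fraction leaves `[0,1]`). -/
def negXiE (m θ c : ℝ) : EReal :=
  (((1 + m) / 2 : ℝ) : EReal) * entSE (pPlus m θ c)
    + (((1 - m) / 2 : ℝ) : EReal) * entSE (pMinus m θ c)

lemma hasDerivAt_entS {p : ℝ} (h0 : 0 < p) (h1 : p < 1) :
    HasDerivAt entS (Real.log p - Real.log (1 - p)) p := by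
  have h1p : (0:ℝ) < 1 - p := by linarith
  have hlog1 : HasDerivAt Real.log p⁻¹ p := Real.hasDerivAt_log h0.ne'
  have hsub : HasDerivAt (fun x : ℝ => 1 - x) (-1) p := by
    simpa using (hasDerivAt_id p).const_sub (1:ℝ)
  have hlog2 : HasDerivAt (fun x : ℝ => Real.log (1 - x)) ((1 - p)⁻¹ * (-1)) p :=
    (Real.hasDerivAt_log h1p.ne').comp p hsub
  have h := ((hasDerivAt_id p).mul hlog1).add (hsub.mul hlog2)
  have key : entS = fun x : ℝ => x * Real.log x + (1 - x) * Real.log (1 - x) := rfl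
  rw [key]
  refine h.congr_deriv ?_
  simp only [id]
  field_simp
  ring

set_option maxHeartbeats 1000000 in
/-- (Lemma 3.7 of the paper.) If `θ` solves `(∂/∂θ)Ξ(m,θ;c) = −κc` and
`p_± = 2θc/(1±m)` lie in `(0,1)`, then `(p_+,p_−)` satisfies the defining equations of
`(q_+,q_−)` (and hence coincides with the unique solution), and
`−(∂/∂m)Ξ(m,θ;c) = ½ log((1−p_+)/(1−p_−))`. -/
theorem statement13 (κ m c θ : ℝ) (hκ : 0 < κ) (hm : m ∈ Set.Ioo (-1 : ℝ) 1)
    (hc : c ∈ Set.Ioo (0 : ℝ) 1) (hθ : θ ∈ Set.Ioo (0 : ℝ) 1)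
    (hcrit : deriv (fun t => Xi m t c) θ = -(κ * c))
    (hp1 : pPlus m θ c ∈ Set.Ioo (0 : ℝ) 1) (hp2 : pMinus m θ c ∈ Set.Ioo (0 : ℝ) 1) :
    pPlus m θ c * (1 - pMinus m θ c) =
        Real.exp κ * (pMinus m θ c * (1 - pPlus m θ c)) ∧
      pPlus m θ c * (1 + m) / 2 + pMinus m θ c * (1 - m) / 2 = c ∧
      (∀ qp qm : ℝ, qp ∈ Set.Icc (0 : ℝ) 1 → qm ∈ Set.Icc (0 : ℝ) 1 →
          qp * (1 - qm) = Real.exp κ * (qm * (1 - qp)) →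
          qp * (1 + m) / 2 + qm * (1 - m) / 2 = c →
          qp = pPlus m θ c ∧ qm = pMinus m θ c) ∧
      -deriv (fun m' => Xi m' θ c) m =
        (1 / 2) * Real.log ((1 - pPlus m θ c) / (1 - pMinus m θ c)) := by
  obtain ⟨hm1, hm2⟩ := hm
  obtain ⟨hc1, hc2⟩ := hc
  obtain ⟨hθ1, hθ2⟩ := hθ
  obtain ⟨hP0, hP1⟩ := hp1
  obtain ⟨hQ0, hQ1⟩ := hp2
  have hmp : (1:ℝ) + m ≠ 0 := by linarith
  have hmm : (1:ℝ) - m ≠ 0 := by linarith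
  set P := pPlus m θ c with hPdef
  set Q := pMinus m θ c with hQdef
  have h1P : (0:ℝ) < 1 - P := by linarith
  have h1Q : (0:ℝ) < 1 - Q := by linarith
  -- derivative in θ
  have hg1 : HasDerivAt (fun t => pPlus m t c) (2*c/(1+m)) θ := by
    have hfun : (fun t => pPlus m t c) = (fun t : ℝ => 2*c/(1+m) * t) := by
      funext t; unfold pPlus; ring
    rw [hfun]
    simpa using (hasDerivAt_id θ).const_mul (2*c/(1+m))
  have hg2 : HasDerivAt (fun t => pMinus m t c) (-(2*c/(1-m))) θ := by
    have hfun : (fun t => pMinus m t c) = (fun t : ℝ => 2*c/(1-m) - 2*c/(1-m) * t) := by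
      funext t; unfold pMinus; ring
    rw [hfun]
    have := ((hasDerivAt_id θ).const_mul (2*c/(1-m))).const_sub (2*c/(1-m))
    simpa using this
  have hcomp1 : HasDerivAt (fun t => entS (pPlus m t c))
      ((Real.log P - Real.log (1 - P)) * (2*c/(1+m))) θ :=
    HasDerivAt.comp (h₂ := entS) θ (hasDerivAt_entS hP0 hP1) hg1
  have hcomp2 : HasDerivAt (fun t => entS (pMinus m t c))
      ((Real.log Q - Real.log (1 - Q)) * (-(2*c/(1-m)))) θ :=
    HasDerivAt.comp (h₂ := entS) θ (hasDerivAt_entS hQ0 hQ1) hg2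
  have hXiθ : HasDerivAt (fun t => Xi m t c)
      (-((1 + m) / 2) * ((Real.log P - Real.log (1 - P)) * (2*c/(1+m)))
        - ((1 - m) / 2) * ((Real.log Q - Real.log (1 - Q)) * (-(2*c/(1-m))))) θ := by
    exact (hcomp1.const_mul (-((1 + m) / 2))).sub (hcomp2.const_mul ((1 - m) / 2))
  have hD : -((1 + m) / 2) * ((Real.log P - Real.log (1 - P)) * (2*c/(1+m)))
        - ((1 - m) / 2) * ((Real.log Q - Real.log (1 - Q)) * (-(2*c/(1-m)))) = -(κ * c) := by
    rw [← hXiθ.deriv]; exact hcrit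
  have hkey : (Real.log P - Real.log (1 - P)) - (Real.log Q - Real.log (1 - Q)) = κ := by
    have e1 : -((1 + m) / 2) * ((Real.log P - Real.log (1 - P)) * (2*c/(1+m)))
        = -(c * (Real.log P - Real.log (1 - P))) := by field_simp
    have e2 : ((1 - m) / 2) * ((Real.log Q - Real.log (1 - Q)) * (-(2*c/(1-m))))
        = -(c * (Real.log Q - Real.log (1 - Q))) := by field_simp
    rw [e1, e2] at hD
    have hc' : c * ((Real.log P - Real.log (1 - P)) - (Real.log Q - Real.log (1 - Q)))
        = c * κ := by linear_combination -hD
    exact mul_left_cancel₀ hc1.ne' hc'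
  -- claim 1
  have claim1 : P * (1 - Q) = Real.exp κ * (Q * (1 - P)) := by
    have he : Real.exp ((Real.log P - Real.log (1 - P)) - (Real.log Q - Real.log (1 - Q)))
        = Real.exp κ := by rw [hkey]
    rw [Real.exp_sub, Real.exp_sub, Real.exp_sub, Real.exp_log hP0, Real.exp_log hQ0,
      Real.exp_log h1P, Real.exp_log h1Q] at he
    have h1 : P / (1 - P) / (Q / (1 - Q)) = Real.exp κ := he
    field_simp at h1
    linarith [h1]
  -- claim 2
  have claim2 : P * (1 + m) / 2 + Q * (1 - m) / 2 = c := by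
    rw [hPdef, hQdef]; unfold pPlus pMinus; field_simp; ring
  clear_value P Q
  refine ⟨claim1, claim2, ?_, ?_⟩
  · intro qp qm hqp hqm heq hlin
    have hA := Real.exp_pos κ
    rcases lt_trichotomy qp P with hlt | heqp | hgt
    · exfalso
      have hqmQ : Q < qm := by nlinarith [hlin, claim2]
      have h1 : qp * (1 - qm) < P * (1 - Q) := by
        have t1 : qp * (1 - qm) ≤ qp * (1 - Q) :=
          mul_le_mul_of_nonneg_left (by linarith) hqp.1
        have t2 : qp * (1 - Q) < P * (1 - Q) := mul_lt_mul_of_pos_right hlt h1Q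
        linarith
      have h2 : Q * (1 - P) < qm * (1 - qp) := by
        have t1 : Q * (1 - P) < Q * (1 - qp) := mul_lt_mul_of_pos_left (by linarith) hQ0
        have t2 : Q * (1 - qp) ≤ qm * (1 - qp) :=
          mul_le_mul_of_nonneg_right hqmQ.le (by linarith [hqp.2])
        linarith
      linarith [mul_lt_mul_of_pos_left h2 hA, heq, claim1]
    · refine ⟨heqp, ?_⟩
      have : (qm - Q) * (1 - m) = 0 := by nlinarith [hlin, claim2]
      have : qm - Q = 0 := by
        rcases mul_eq_zero.1 this with h | h
        · exact h
        · exact absurd h hmm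
      linarith
    · exfalso
      have hqmQ : qm < Q := by nlinarith [hlin, claim2]
      have h1 : P * (1 - Q) < qp * (1 - qm) := by
        have t1 : P * (1 - Q) < P * (1 - qm) := mul_lt_mul_of_pos_left (by linarith) hP0
        have t2 : P * (1 - qm) < qp * (1 - qm) :=
          mul_lt_mul_of_pos_right hgt (by linarith)
        linarith
      have h2 : qm * (1 - qp) < Q * (1 - P) := by
        have t1 : qm * (1 - qp) ≤ qm * (1 - P) :=
          mul_le_mul_of_nonneg_left (by linarith) hqm.1
        have t2 : qm * (1 - P) < Q * (1 - P) := mul_lt_mul_of_pos_right hqmQ h1P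
        linarith
      linarith [mul_lt_mul_of_pos_left h2 hA, heq, claim1]
  · -- derivative in m
    rw [hPdef, hQdef]
    rw [hPdef] at hP0 hP1 h1P
    rw [hQdef] at hQ0 hQ1 h1Q
    have hgP : HasDerivAt (fun m' => pPlus m' θ c) (-(2*θ*c)/(1+m)^2) m := by
      have h := (hasDerivAt_const m (2*θ*c)).div
        ((hasDerivAt_const m (1:ℝ)).add (hasDerivAt_id m)) hmp
      have hfun : (fun m' => pPlus m' θ c) = (fun m' : ℝ => 2*θ*c / (1 + m')) := rfl
      rw [hfun]
      refine h.congr_deriv ?_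
      simp only [Pi.add_apply, Pi.sub_apply, id]
      ring
    have hgQ : HasDerivAt (fun m' => pMinus m' θ c) ((2*(1-θ)*c)/(1-m)^2) m := by
      have h := (hasDerivAt_const m (2*(1-θ)*c)).div
        ((hasDerivAt_const m (1:ℝ)).sub (hasDerivAt_id m)) hmm
      have hfun : (fun m' => pMinus m' θ c) = (fun m' : ℝ => 2*(1-θ)*c / (1 - m')) := rfl
      rw [hfun]
      refine h.congr_deriv ?_
      simp only [Pi.add_apply, Pi.sub_apply, id]
      ring
    have hcP : HasDerivAt (fun m' => entS (pPlus m' θ c))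
        ((Real.log (pPlus m θ c) - Real.log (1 - pPlus m θ c)) * (-(2*θ*c)/(1+m)^2)) m :=
      HasDerivAt.comp (h₂ := entS) m (hasDerivAt_entS hP0 hP1) hgP
    have hcQ : HasDerivAt (fun m' => entS (pMinus m' θ c))
        ((Real.log (pMinus m θ c) - Real.log (1 - pMinus m θ c)) * ((2*(1-θ)*c)/(1-m)^2)) m :=
      HasDerivAt.comp (h₂ := entS) m (hasDerivAt_entS hQ0 hQ1) hgQ
    have hfA : HasDerivAt (fun m' : ℝ => -((1 + m') / 2)) (-(1/2)) m := by
      have h := (((hasDerivAt_id m).const_add 1).div_const 2).neg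
      exact h
    have hfB : HasDerivAt (fun m' : ℝ => (1 - m') / 2) (-(1/2)) m := by
      have h := ((hasDerivAt_id m).const_sub 1).div_const 2
      exact h.congr_deriv (by norm_num)
    have hXim : HasDerivAt (fun m' => Xi m' θ c)
        ((-(1/2)) * entS (pPlus m θ c) + (-((1 + m) / 2)) * ((Real.log (pPlus m θ c) - Real.log (1 - pPlus m θ c)) * (-(2*θ*c)/(1+m)^2))
          - ((-(1/2)) * entS (pMinus m θ c) + ((1 - m) / 2) * ((Real.log (pMinus m θ c) - Real.log (1 - pMinus m θ c)) * ((2*(1-θ)*c)/(1-m)^2)))) m := by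
      have h := (hfA.mul hcP).sub (hfB.mul hcQ)
      exact h
    rw [hXim.deriv, Real.log_div h1P.ne' h1Q.ne']
    simp only [entS, pPlus, pMinus]
    have l1 : Real.log (1 - 2*θ*c/(1+m)) = Real.log (1 - 2*θ*c/(1+m)) := rfl
    field_simp
    ring
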